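/- Let V be a nonempty finite subset of ℝ≥0, f a full-support probability mass function on V, F(s) = Σ_{s' ∈ V, s' ≤ s} f(s'), and for s ∈ V let pred(s) be the largest element of V strictly below s, or 0 if none exists. Then for every function x : V → ℝ: Σ_{v ∈ V} f(v)·(Σ_{s ∈ V, s ≤ v} x(s)·(s − pred(s))) = Σ_{s ∈ V} x(s)·(s − pred(s))·(1 − F(s) + f(s)). Equivalently, the expected envelope utility equals E[ϑ(v)·x(v)], where the discrete virtual value for utility is ϑ(s) = (s − pred(s))·(1 − F(s) + f(s))/f(s). -/

import Mathlib

open Finset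

namespace DiscreteVV

/-- The largest element of `V` strictly below `s`, or `0` if none exists. -/
noncomputable def predV (V : Finset ℝ) (s : ℝ) : ℝ :=
  ((V.filter fun s' => s' < s).max).unbotD 0

/-- The discrete CDF `F(s) = Σ_{s' ∈ V, s' ≤ s} f(s')`. -/
noncomputable def cdf (V : Finset ℝ) (f : ℝ → ℝ) (s : ℝ) : ℝ :=
  ∑ s' ∈ V.filter (fun s' => s' ≤ s), f s'

/-- For a finite value space `V ⊆ ℝ≥0` with full-support pmf `f` and
any `x : V → ℝ`, the expected envelope utility equals
`Σ_{s} x(s)·(s − pred(s))·(1 − F(s) + f(s))`; equivalently, it equals `E[ϑ(v)·x(v)]`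
with the discrete virtual value for utility
`ϑ(s) = (s − pred(s))·(1 − F(s) + f(s))/f(s)`. -/
theorem expected_envelope_utility_discrete
    (V : Finset ℝ) (hV : V.Nonempty) (hVnn : ∀ s ∈ V, (0 : ℝ) ≤ s)
    (f : ℝ → ℝ) (hf : ∀ s ∈ V, 0 < f s) (hsum : ∑ s ∈ V, f s = 1)
    (x : ℝ → ℝ) :
    (∑ v ∈ V, f v * ∑ s ∈ V.filter (fun s => s ≤ v), x s * (s - predV V s))
        = (∑ s ∈ V, x s * (s - predV V s) * (1 - cdf V f s + f s)) ∧
    (∑ v ∈ V, f v * ∑ s ∈ V.filter (fun s => s ≤ v), x s * (s - predV V s))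
        = ∑ v ∈ V, f v * ((v - predV V v) * (1 - cdf V f v + f v) / f v * x v) := by
  have htail : ∀ s ∈ V, ∑ v ∈ V.filter (fun v => s ≤ v), f v = 1 - cdf V f s + f s := by
    intro s hs
    have hsplit := Finset.sum_filter_add_sum_filter_not V (fun v => s ≤ v) f
    rw [hsum] at hsplit
    have hcdf : cdf V f s = (∑ v ∈ V.filter (fun v => ¬ s ≤ v), f v) + f s := by
      have hfe : V.filter (fun s' => s' ≤ s) = insert s (V.filter (fun v => ¬ s ≤ v)) := by
        ext a
        simp only [Finset.mem_filter, Finset.mem_insert]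
        constructor
        · rintro ⟨ha, hle⟩
          rcases eq_or_lt_of_le hle with h | h
          · exact Or.inl h
          · exact Or.inr ⟨ha, not_le.mpr h⟩
        · intro h
          rcases h with h | ⟨ha, hlt⟩
          · subst h; exact ⟨hs, le_refl _⟩
          · exact ⟨ha, le_of_lt (not_le.mp hlt)⟩
      have hns : s ∉ V.filter (fun v => ¬ s ≤ v) := by
        simp
      rw [cdf, hfe, Finset.sum_insert hns, add_comm]
    linarith
  have key : (∑ v ∈ V, f v * ∑ s ∈ V.filter (fun s => s ≤ v), x s * (s - predV V s))
      = (∑ s ∈ V, x s * (s - predV V s) * (1 - cdf V f s + f s)) := by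
    have step1 : (∑ v ∈ V, f v * ∑ s ∈ V.filter (fun s => s ≤ v), x s * (s - predV V s))
        = ∑ v ∈ V, ∑ s ∈ V, if s ≤ v then f v * (x s * (s - predV V s)) else 0 := by
      refine Finset.sum_congr rfl fun v _ => ?_
      rw [Finset.mul_sum, Finset.sum_filter]
    rw [step1, Finset.sum_comm]
    refine Finset.sum_congr rfl fun s hs => ?_
    have : (∑ v ∈ V, if s ≤ v then f v * (x s * (s - predV V s)) else 0)
        = (∑ v ∈ V.filter (fun v => s ≤ v), f v) * (x s * (s - predV V s)) := by
      rw [Finset.sum_mul, Finset.sum_filter]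
    rw [this, htail s hs]
    ring
  refine ⟨key, key.trans (Finset.sum_congr rfl fun v hv => ?_)⟩
  have hfv := (hf v hv).ne'
  field_simp

end DiscreteVV
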